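/- Let V_R and V_B be finite disjoint sets of vectors in {0,1}^d and let c ∈ {0,1}^d satisfy δ(b,c) < δ(r,c) for every b ∈ V_B and r ∈ V_R. Let R = ⋃_{r ∈ V_R} O(r) and let c' ∈ {0,1}^d be the vector with c'[i] = c[i] for every coordinate i ∈ R and c'[i] = 1 for every coordinate i ∉ R. Then c' also satisfies δ(b,c') < δ(r,c') for every b ∈ V_B and r ∈ V_R. -/
import Mathlib


/-- Setting a separating center to `1` on all coordinates outside the union of the
supports of the red vectors keeps it separating. -/
theorem center_fill_outside_red_support (d : ℕ) (VR VB : Finset (Fin d → Bool))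
    (hdisj : Disjoint VR VB) (c c' : Fin d → Bool)
    (hsep : ∀ b ∈ VB, ∀ r ∈ VR, hammingDist b c < hammingDist r c)
    (hc' : ∀ i, ((∃ r ∈ VR, r i = true) → c' i = c i) ∧
                (¬ (∃ r ∈ VR, r i = true) → c' i = true)) :
    ∀ b ∈ VB, ∀ r ∈ VR, hammingDist b c' < hammingDist r c' := by
  classical
  intro b hb r hr
  set f : Fin d → ℕ := fun i => if (¬ ∃ r ∈ VR, r i = true) ∧ c i = false then 1 else 0 with hf
  have hdist : ∀ x y : Fin d → Bool,
      hammingDist x y = ∑ i, if x i ≠ y i then 1 else 0 := by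
    intro x y
    rw [hammingDist, Finset.card_filter]
  have key1 : ∀ i, (if b i ≠ c' i then 1 else 0) ≤ (if b i ≠ c i then 1 else 0) + f i := by
    intro i
    obtain ⟨h1, h2⟩ := hc' i
    by_cases hi : ∃ r ∈ VR, r i = true
    · simp [hf, hi, h1 hi]
    · have hc'i := h2 hi
      cases hci : c i
      · have hfi : f i = 1 := if_pos ⟨hi, hci⟩
        rw [hfi]; cases b i <;> simp [hc'i, hci]
      · have hcc : c' i = c i := by rw [hc'i, hci]
        have hfi : f i = 0 := if_neg (by simp [hci])
        rw [hcc, hfi]; cases b i <;> simp [hci]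
  have key2 : ∀ i, (if r i ≠ c' i then 1 else 0) = (if r i ≠ c i then 1 else 0) + f i := by
    intro i
    obtain ⟨h1, h2⟩ := hc' i
    by_cases hi : ∃ r ∈ VR, r i = true
    · simp [hf, hi, h1 hi]
    · have hri : r i = false := by
        push_neg at hi
        simpa using hi r hr
      have hc'i := h2 hi
      cases hci : c i
      · have hfi : f i = 1 := if_pos ⟨hi, hci⟩
        rw [hfi]; simp [hri, hc'i, hci]
      · have hcc : c' i = c i := by rw [hc'i, hci]
        have hfi : f i = 0 := if_neg (by simp [hci])
        rw [hcc, hfi]; simp [hci]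
  have h1 : hammingDist b c' ≤ hammingDist b c + ∑ i, f i := by
    rw [hdist, hdist, ← Finset.sum_add_distrib]
    exact Finset.sum_le_sum fun i _ => key1 i
  have h2 : hammingDist r c' = hammingDist r c + ∑ i, f i := by
    rw [hdist, hdist, ← Finset.sum_add_distrib]
    exact Finset.sum_congr rfl fun i _ => key2 i
  calc hammingDist b c' ≤ hammingDist b c + ∑ i, f i := h1
    _ < hammingDist r c + ∑ i, f i := by
        have := hsep b hb r hr; omega
    _ = hammingDist r c' := h2.symm
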